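/- Let p > 1 and k ≥ 1. For every z ∈ ℝ^k and every real t > 0 one has |V_p(tz)| ≤ max{t, t^{p/2}} · |V_p(z)|. -/
import Mathlib


noncomputable def Vp (p : ℝ) {E : Type*} [NormedAddCommGroup E] [NormedSpace ℝ E] (z : E) : E :=
  ((1 + ‖z‖ ^ 2) ^ ((p - 2) / 4)) • z

lemma key_Vp (p t s : ℝ) (hp : 1 < p) (ht : 0 < t) (hs : 0 ≤ s) :
    (1 + (t*s)^2) ^ ((p-2)/4) * (t*s) ≤ max t (t ^ (p/2)) * ((1 + s^2) ^ ((p-2)/4) * s) := by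
  set α := (p-2)/4 with hα
  have h1 : (0:ℝ) < 1 + s^2 := by positivity
  have h2 : (0:ℝ) < 1 + (t*s)^2 := by positivity
  have ht2 : t ^ (p/2) = (t^2) ^ α * t := by
    rw [← Real.rpow_natCast t 2, ← Real.rpow_mul ht.le, ← Real.rpow_add_one ht.ne']
    norm_num [hα]
    ring_nf
  have h4 : (t^2*(1+s^2))^α = (t^2)^α * (1+s^2)^α :=
    Real.mul_rpow (by positivity) h1.le
  rcases le_total t 1 with htle | htge
  · rcases le_total 2 p with hple | hpge
    · have hαpos : 0 ≤ α := by rw [hα]; linarith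
      have ht1 : t^2 ≤ 1 := by nlinarith
      have hb : 1 + (t*s)^2 ≤ 1 + s^2 := by
        nlinarith [mul_nonneg (sub_nonneg.mpr ht1) (sq_nonneg s)]
      have h3 := Real.rpow_le_rpow h2.le hb hαpos
      calc (1 + (t*s)^2)^α * (t*s) ≤ (1+s^2)^α * (t*s) :=
            mul_le_mul_of_nonneg_right h3 (by positivity)
        _ = t * ((1+s^2)^α * s) := by ring
        _ ≤ max t (t^(p/2)) * ((1+s^2)^α * s) :=
            mul_le_mul_of_nonneg_right (le_max_left _ _) (by positivity)
    · have hαneg : α ≤ 0 := by rw [hα]; linarith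
      have hb : t^2*(1+s^2) ≤ 1 + (t*s)^2 := by nlinarith
      have hpos : (0:ℝ) < t^2*(1+s^2) := by positivity
      have h3 := Real.rpow_le_rpow_of_nonpos hpos hb hαneg
      calc (1 + (t*s)^2)^α * (t*s) ≤ (t^2*(1+s^2))^α * (t*s) :=
            mul_le_mul_of_nonneg_right h3 (by positivity)
        _ = ((t^2)^α * t) * ((1+s^2)^α * s) := by rw [h4]; ring
        _ = t^(p/2) * ((1+s^2)^α * s) := by rw [ht2]
        _ ≤ max t (t^(p/2)) * ((1+s^2)^α * s) :=
            mul_le_mul_of_nonneg_right (le_max_right _ _) (by positivity)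
  · rcases le_total 2 p with hple | hpge
    · have hαpos : 0 ≤ α := by rw [hα]; linarith
      have hb : 1 + (t*s)^2 ≤ t^2*(1+s^2) := by nlinarith
      have h3 := Real.rpow_le_rpow h2.le hb hαpos
      calc (1 + (t*s)^2)^α * (t*s) ≤ (t^2*(1+s^2))^α * (t*s) :=
            mul_le_mul_of_nonneg_right h3 (by positivity)
        _ = ((t^2)^α * t) * ((1+s^2)^α * s) := by rw [h4]; ring
        _ = t^(p/2) * ((1+s^2)^α * s) := by rw [ht2]
        _ ≤ max t (t^(p/2)) * ((1+s^2)^α * s) :=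
            mul_le_mul_of_nonneg_right (le_max_right _ _) (by positivity)
    · have hαneg : α ≤ 0 := by rw [hα]; linarith
      have ht1 : 1 ≤ t^2 := by nlinarith
      have hb : 1 + s^2 ≤ 1 + (t*s)^2 := by
        nlinarith [mul_nonneg (sub_nonneg.mpr ht1) (sq_nonneg s)]
      have h3 := Real.rpow_le_rpow_of_nonpos h1 hb hαneg
      calc (1 + (t*s)^2)^α * (t*s) ≤ (1+s^2)^α * (t*s) :=
            mul_le_mul_of_nonneg_right h3 (by positivity)
        _ = t * ((1+s^2)^α * s) := by ring
        _ ≤ max t (t^(p/2)) * ((1+s^2)^α * s) :=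
            mul_le_mul_of_nonneg_right (le_max_left _ _) (by positivity)

theorem stmt_0 (k : ℕ) (hk : 1 ≤ k) (p : ℝ) (hp : 1 < p)
    (z : EuclideanSpace ℝ (Fin k)) (t : ℝ) (ht : 0 < t) :
    ‖Vp p (t • z)‖ ≤ max t (t ^ (p / 2)) * ‖Vp p z‖ := by
  have hnorm : ‖t • z‖ = t * ‖z‖ := by
    rw [norm_smul, Real.norm_eq_abs, abs_of_pos ht]
  have hV : ∀ w : EuclideanSpace ℝ (Fin k),
      ‖Vp p w‖ = (1 + ‖w‖^2) ^ ((p-2)/4) * ‖w‖ := by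
    intro w
    rw [Vp, norm_smul, Real.norm_eq_abs, abs_of_pos (by positivity)]
  rw [hV, hV, hnorm]
  exact key_Vp p t ‖z‖ hp ht (norm_nonneg z)
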